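/- Let N ≥ 1 and 1 ≤ r ≤ N, let q ∈ ℂ satisfy q ≠ 0 and q^{2k} ≠ 1 for all 1 ≤ k ≤ N, and let λ_1 ≥ λ_2 ≥ ⋯ ≥ λ_N ≥ 0 be integers with conjugate parts λ'_m := #{ i ∈ {1,…,N} : λ_i ≥ m } for m ≥ 1. Then Σ_{J ⊆ {1,…,N}, #J = r} (Σ_{j∈J} λ_j) · ∏_{j∈J} q^{N−2j+1} = Σ_{m=1}^{λ_1} Σ_{s=1}^{r} (−1)^{s−1} · [N choose r−s]_q · q^{s(N−λ'_m)} · [s·λ'_m]_q/[s]_q. -/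

import Mathlib

open scoped BigOperators

noncomputable section

namespace Stmt15

/-- The symmetric q-integer `[n]_q = (qⁿ − q⁻ⁿ)/(q − q⁻¹)`. -/
def qint (q : ℂ) (n : ℕ) : ℂ := (q ^ n - q⁻¹ ^ n) / (q - q⁻¹)

/-- The q-factorial `[n]_q! = [n]_q · [n−1]_q ⋯ [1]_q` (with `[0]_q! = 1`). -/
def qfact (q : ℂ) : ℕ → ℂ
  | 0 => 1
  | n + 1 => qint q (n + 1) * qfact q n

/-- The q-binomial coefficient `[n choose r]_q = [n]_q!/([r]_q!·[n−r]_q!)`. -/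
def qbinom (q : ℂ) (n r : ℕ) : ℂ := qfact q n / (qfact q r * qfact q (n - r))

/-- The conjugate partition: `λ'_m = #{i : λ_i ≥ m}`.  Here `lam i` is the part `λ_{i+1}`. -/
def conjPart (N : ℕ) (lam : Fin N → ℕ) (m : ℕ) : ℕ :=
  (Finset.univ.filter fun i : Fin N => m ≤ lam i).card

/-! ### Auxiliary lemmas -/

open Finset

variable {α β : Type*} [DecidableEq α] [DecidableEq β]

/-- Elementary symmetric sum of `f` over subsets of `s` of size `k`. -/
def esym (s : Finset α) (f : α → ℂ) (k : ℕ) : ℂ :=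
  ∑ J ∈ s.powersetCard k, ∏ j ∈ J, f j

omit [DecidableEq α] in
lemma esym_zero (s : Finset α) (f : α → ℂ) : esym s f 0 = 1 := by
  simp [esym]

lemma esym_insert {a : α} {s : Finset α} (h : a ∉ s) (f : α → ℂ) (k : ℕ) :
    esym (insert a s) f (k + 1) = esym s f (k + 1) + f a * esym s f k := by
  unfold esym
  rw [Finset.powersetCard_succ_insert h, Finset.sum_union, Finset.sum_image, Finset.mul_sum]
  · congr 1
    refine Finset.sum_congr rfl fun J hJ => ?_
    rw [Finset.prod_insert fun haJ => h ((Finset.mem_powersetCard.1 hJ).1 haJ)]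
  · intro J hJ K hK hJK
    have hJ' : a ∉ J := fun haJ => h ((Finset.mem_powersetCard.1 hJ).1 haJ)
    have hK' : a ∉ K := fun haK => h ((Finset.mem_powersetCard.1 hK).1 haK)
    rw [← Finset.erase_insert hJ', ← Finset.erase_insert hK', hJK]
  · rw [Finset.disjoint_left]
    intro J hJ hJ'
    obtain ⟨K, hK, rfl⟩ := Finset.mem_image.1 hJ'
    exact (fun haJ => h ((Finset.mem_powersetCard.1 hJ).1 haJ)) (Finset.mem_insert_self a K)

omit [DecidableEq α] in
lemma esym_big {s : Finset α} {k : ℕ} (h : s.card < k) (f : α → ℂ) : esym s f k = 0 := by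
  simp [esym, Finset.powersetCard_eq_empty.2 h]

lemma esym_erase {i : α} {s : Finset α} (h : i ∈ s) (f : α → ℂ) (k : ℕ) :
    esym (s.erase i) f k = ∑ t ∈ Finset.range (k + 1), (-1) ^ t * f i ^ t * esym s f (k - t) := by
  induction k with
  | zero => simp [esym_zero]
  | succ k ih =>
    have hins := esym_insert (Finset.notMem_erase i s) f k
    rw [Finset.insert_erase h] at hins
    have hstep : esym (s.erase i) f (k + 1) = esym s f (k + 1) - f i * esym (s.erase i) f k := by
      rw [hins]; ring
    have key : ∑ t ∈ Finset.range (k+1), (-1:ℂ)^(t+1) * f i^(t+1) * esym s f (k-t)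
        = - (f i * ∑ t ∈ Finset.range (k+1), (-1:ℂ)^t * f i^t * esym s f (k-t)) := by
      rw [Finset.mul_sum, ← Finset.sum_neg_distrib]
      exact Finset.sum_congr rfl fun t _ => by ring
    rw [hstep, ih, eq_comm, Finset.sum_range_succ' _ (k+1)]
    simp only [Nat.succ_sub_succ, Nat.sub_zero, pow_zero, one_mul]
    rw [key]
    ring

omit [DecidableEq α] [DecidableEq β] in
lemma esym_map (g : β ↪ α) (s : Finset β) (f : α → ℂ) (k : ℕ) :
    esym (s.map g) f k = esym s (f ∘ g) k := by
  unfold esym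
  rw [Finset.powersetCard_map, Finset.sum_map]
  refine Finset.sum_congr rfl fun J hJ => ?_
  rw [show (Finset.mapEmbedding g).toEmbedding J = J.map g from Finset.mapEmbedding_apply,
    Finset.prod_map]
  rfl

omit [DecidableEq α] in
lemma esym_smul (s : Finset α) (c : ℂ) (f : α → ℂ) (k : ℕ) :
    esym s (fun i => c * f i) k = c ^ k * esym s f k := by
  unfold esym
  rw [Finset.mul_sum]
  refine Finset.sum_congr rfl fun J hJ => ?_
  rw [Finset.prod_mul_distrib, Finset.prod_const, (Finset.mem_powersetCard.1 hJ).2]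

variable {q : ℂ}

lemma qint_eq (n : ℕ) : qint q n = (q ^ (n : ℤ) - q ^ (-(n : ℤ))) / (q - q⁻¹) := by
  simp [qint, zpow_neg, inv_pow]

lemma denom_ne (hq0 : q ≠ 0) (h2 : q ^ 2 ≠ 1) : q - q⁻¹ ≠ 0 := by
  intro h
  apply h2
  have hq : q = q⁻¹ := sub_eq_zero.1 h
  rw [pow_two]
  nth_rewrite 2 [hq]
  exact mul_inv_cancel₀ hq0

lemma qint_ne (hq0 : q ≠ 0) {n : ℕ} (h : q ^ (2 * n) ≠ 1) (h2 : q ^ 2 ≠ 1) : qint q n ≠ 0 := by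
  rw [qint, div_ne_zero_iff]
  refine ⟨?_, denom_ne hq0 h2⟩
  intro hnum
  apply h
  have heq : q ^ n = q⁻¹ ^ n := sub_eq_zero.1 hnum
  have h1 : q ^ (2 * n) = q ^ n * q ^ n := by rw [two_mul, pow_add]
  rw [h1]
  nth_rewrite 2 [heq]
  rw [← mul_pow, mul_inv_cancel₀ hq0, one_pow]

lemma qfact_ne (hq0 : q ≠ 0) {n N : ℕ} (hn : n ≤ N) (hq : ∀ k, 1 ≤ k → k ≤ N → q ^ (2 * k) ≠ 1)
    (h2 : q ^ 2 ≠ 1) : qfact q n ≠ 0 := by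
  induction n with
  | zero => simp [qfact]
  | succ n ih =>
    rw [qfact]
    exact mul_ne_zero (qint_ne hq0 (hq (n + 1) (by omega) hn) h2) (ih (by omega))

lemma qint_pascal (hq0 : q ≠ 0) {k N : ℕ} (hkN : k ≤ N) :
    qint q (N + 1) = q ^ (k : ℤ) * qint q (N + 1 - k)
      + q ^ ((k : ℤ) - 1 - (N : ℤ)) * qint q k := by
  rw [qint_eq (N + 1), qint_eq (N + 1 - k), qint_eq k]
  have hc : ((N + 1 - k : ℕ) : ℤ) = (N : ℤ) + 1 - k := by omega
  rw [hc]
  push_cast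
  rw [mul_div_assoc', mul_div_assoc', ← add_div]
  congr 1
  have e1 : (q : ℂ) ^ (k : ℤ) * q ^ ((N : ℤ) + 1 - k) = q ^ ((N : ℤ) + 1) := by
    rw [← zpow_add₀ hq0]; congr 1; ring
  have e2 : (q : ℂ) ^ (k : ℤ) * q ^ (-((N : ℤ) + 1 - k)) = q ^ (2 * (k : ℤ) - N - 1) := by
    rw [← zpow_add₀ hq0]; congr 1; ring
  have e3 : (q : ℂ) ^ ((k : ℤ) - 1 - N) * q ^ (k : ℤ) = q ^ (2 * (k : ℤ) - N - 1) := by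
    rw [← zpow_add₀ hq0]; congr 1; ring
  have e4 : (q : ℂ) ^ ((k : ℤ) - 1 - N) * q ^ (-(k : ℤ)) = q ^ (-((N : ℤ) + 1)) := by
    rw [← zpow_add₀ hq0]; congr 1; ring
  rw [mul_sub, mul_sub, e1, e2, e3, e4]
  ring

lemma qbinom_zero {n N : ℕ} (hq0 : q ≠ 0) (hn : n ≤ N)
    (hq : ∀ k, 1 ≤ k → k ≤ N → q ^ (2 * k) ≠ 1) (h2 : q ^ 2 ≠ 1) :
    qbinom q n 0 = 1 := by
  rw [qbinom]
  have := qfact_ne hq0 hn hq h2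
  simp [qfact]
  exact this

lemma qbinom_self {n N : ℕ} (hq0 : q ≠ 0) (hn : n ≤ N)
    (hq : ∀ k, 1 ≤ k → k ≤ N → q ^ (2 * k) ≠ 1) (h2 : q ^ 2 ≠ 1) :
    qbinom q n n = 1 := by
  rw [qbinom]
  have := qfact_ne hq0 hn hq h2
  simp [qfact]
  exact this

lemma qbinom_pascal {k N : ℕ} (hq0 : q ≠ 0) (hk1 : 1 ≤ k) (hkN : k ≤ N)
    (hq : ∀ j, 1 ≤ j → j ≤ N + 1 → q ^ (2 * j) ≠ 1) (h2 : q ^ 2 ≠ 1) :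
    qbinom q (N + 1) k = q ^ (k : ℤ) * qbinom q N k
      + q ^ ((k : ℤ) - 1 - (N : ℤ)) * qbinom q N (k - 1) := by
  obtain ⟨k', rfl⟩ : ∃ k', k = k' + 1 := ⟨k - 1, by omega⟩
  have hfk' : qfact q k' ≠ 0 := qfact_ne hq0 (by omega) hq h2
  have hik : qint q (k' + 1) ≠ 0 := qint_ne hq0 (hq _ (by omega) (by omega)) h2
  have hfNk1 : qfact q (N - k' - 1) ≠ 0 := qfact_ne hq0 (by omega) hq h2
  have hiNk : qint q (N - k') ≠ 0 := qint_ne hq0 (hq _ (by omega) (by omega)) h2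
  have hfN : qfact q N ≠ 0 := qfact_ne hq0 (by omega) hq h2
  have e1 : N + 1 - (k' + 1) = N - k' := by omega
  have e2 : N - (k' + 1) = N - k' - 1 := by omega
  have e3 : qfact q (N - k') = qint q (N - k') * qfact q (N - k' - 1) := by
    rw [show N - k' = (N - k' - 1) + 1 by omega, qfact]
    rw [show N - k' - 1 + 1 = N - k' by omega]
  have e4 : qfact q (k' + 1) = qint q (k' + 1) * qfact q k' := rfl
  have e5 : qfact q (N + 1) = qint q (N + 1) * qfact q N := rfl
  have hp := qint_pascal hq0 hkN (q := q) (k := k' + 1)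
  rw [show N + 1 - (k' + 1) = N - k' from e1] at hp
  simp only [qbinom, e1, e2, Nat.add_sub_cancel, e5]
  rw [e3, e4, hp]
  field_simp

/-- The Gaussian evaluation of the elementary symmetric polynomial at
`q^{M-1}, q^{M-3}, …, q^{1-M}`. -/
lemma esym_gauss (hq0 : q ≠ 0) :
    ∀ M k : ℕ, k ≤ M → (∀ j, 1 ≤ j → j ≤ M → q ^ (2 * j) ≠ 1) →
    esym (univ : Finset (Fin M)) (fun i => q ^ ((M : ℤ) - 2 * (i : ℕ) - 1)) k = qbinom q M k := by
  intro M
  induction M with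
  | zero =>
    intro k hk _
    interval_cases k
    rw [esym_zero]
    simp [qbinom, qfact]
  | succ M ih =>
    intro k hk hq
    have h2 : q ^ 2 ≠ 1 := by have := hq 1 le_rfl (by omega); simpa using this
    have hqM : ∀ j, 1 ≤ j → j ≤ M → q ^ (2 * j) ≠ 1 := fun j h1 h2' => hq j h1 (by omega)
    match k, hk with
    | 0, _ =>
      rw [esym_zero]
      exact (qbinom_zero hq0 (le_refl (M + 1)) hq h2).symm
    | (k' + 1), hk =>
      have hnotmem : Fin.last M ∉ (univ : Finset (Fin M)).map Fin.castSuccEmb := by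
        rw [Finset.mem_map]
        rintro ⟨i, -, hi⟩
        exact (Fin.castSucc_lt_last i).ne (by exact hi)
      have hrw : (univ : Finset (Fin (M + 1)))
          = insert (Fin.last M) ((univ : Finset (Fin M)).map Fin.castSuccEmb) := by
        rw [Fin.univ_castSuccEmb, Finset.cons_eq_insert]
      rw [hrw, esym_insert hnotmem, esym_map, esym_map]
      have hfun : ((fun i : Fin (M + 1) => q ^ (((M + 1 : ℕ) : ℤ) - 2 * (i : ℕ) - 1))
            ∘ Fin.castSuccEmb)
          = fun i : Fin M => q * q ^ ((M : ℤ) - 2 * (i : ℕ) - 1) := by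
        funext i
        simp only [Function.comp_apply, Fin.coe_castSuccEmb, Fin.coe_castSucc]
        rw [show ((M + 1 : ℕ) : ℤ) - 2 * (i : ℕ) - 1 = 1 + ((M : ℤ) - 2 * (i : ℕ) - 1) by
          push_cast; ring, zpow_add₀ hq0, zpow_one]
      have hlast : q ^ (((M + 1 : ℕ) : ℤ) - 2 * ((Fin.last M : Fin (M + 1)) : ℕ) - 1)
          = q ^ (-(M : ℤ)) := by
        rw [Fin.val_last]
        congr 1
        push_cast
        ring
      rw [hfun, hlast, esym_smul, esym_smul]
      by_cases hcase : k' + 1 ≤ M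
      · rw [ih (k' + 1) hcase hqM, ih k' (by omega) hqM,
          qbinom_pascal hq0 (by omega) hcase hq h2]
        have hexp : q ^ (((k' + 1 : ℕ) : ℤ) - 1 - (M : ℤ)) = q ^ (-(M : ℤ)) * q ^ k' := by
          rw [show ((k' + 1 : ℕ) : ℤ) - 1 - (M : ℤ) = -(M : ℤ) + (k' : ℤ) by push_cast; ring,
            zpow_add₀ hq0, zpow_natCast]
        rw [Nat.add_sub_cancel, hexp, zpow_natCast]
        ring
      · have hk'M : k' = M := by omega
        rw [hk'M, esym_big (by simp), ih M le_rfl hqM, qbinom_self hq0 (le_refl M) hqM h2,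
          qbinom_self hq0 (le_refl (M + 1)) hq h2]
        have hone : q ^ (-(M : ℤ)) * (q : ℂ) ^ M = 1 := by
          rw [← zpow_natCast q M, ← zpow_add₀ hq0]
          simp
        linear_combination hone

lemma znum_ne (hq0 : q ≠ 0) {n : ℕ} (h : q ^ (2 * n) ≠ 1) (h2 : q ^ 2 ≠ 1) :
    q ^ (n : ℤ) - q ^ (-(n : ℤ)) ≠ 0 := by
  have h1 := qint_ne hq0 h h2
  rw [qint_eq, div_ne_zero_iff] at h1
  exact h1.1

/-- The power sum `Σ_{i<L} (q^{N-2i-1})^s` in closed form. -/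
lemma power_sum (hq0 : q ≠ 0) (h2 : q ^ 2 ≠ 1) {s L N : ℕ}
    (hs : q ^ (2 * s) ≠ 1) (hL : L ≤ N) :
    ∑ i ∈ Finset.range L, (q ^ ((N : ℤ) - 2 * (i : ℕ) - 1)) ^ s
      = q ^ (s * (N - L)) * (qint q (s * L) / qint q s) := by
  have hden : q ^ (s : ℤ) - q ^ (-(s : ℤ)) ≠ 0 := znum_ne hq0 hs h2
  have hd2 : q - q⁻¹ ≠ 0 := denom_ne hq0 h2
  have htel : ∑ i ∈ Finset.range L,
      (q ^ ((N : ℤ) - 2 * (i : ℕ) - 1)) ^ s * (q ^ (s : ℤ) - q ^ (-(s : ℤ)))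
        = q ^ ((s : ℤ) * N) - q ^ ((s : ℤ) * ((N : ℤ) - 2 * L)) := by
    have hterm : ∀ i ∈ Finset.range L,
        (q ^ ((N : ℤ) - 2 * (i : ℕ) - 1)) ^ s * (q ^ (s : ℤ) - q ^ (-(s : ℤ)))
          = q ^ ((s : ℤ) * ((N : ℤ) - 2 * (i : ℕ)))
            - q ^ ((s : ℤ) * ((N : ℤ) - 2 * ((i + 1 : ℕ) : ℤ))) := by
      intro i _
      rw [← zpow_natCast (q ^ ((N : ℤ) - 2 * (i : ℕ) - 1)) s, ← zpow_mul, mul_sub,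
        ← zpow_add₀ hq0, ← zpow_add₀ hq0]
      congr 2 <;> push_cast <;> ring
    rw [Finset.sum_congr rfl hterm]
    have := Finset.sum_range_sub' (fun i : ℕ => q ^ ((s : ℤ) * ((N : ℤ) - 2 * (i : ℕ)))) L
    rw [this]
    norm_num
  have hdivcan : ∀ a b d : ℂ, d ≠ 0 → (a / d) / (b / d) = a / b := fun a b d hd => by
    rcases eq_or_ne b 0 with rfl | hb
    · simp
    · field_simp
  have hqdiv : qint q (s * L) / qint q s
      = (q ^ ((s * L : ℕ) : ℤ) - q ^ (-((s * L : ℕ) : ℤ))) / (q ^ (s : ℤ) - q ^ (-(s : ℤ))) := by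
    rw [qint_eq, qint_eq, hdivcan _ _ _ hd2]
  have hmul : (q ^ (s * (N - L))
        * ((q ^ ((s * L : ℕ) : ℤ) - q ^ (-((s * L : ℕ) : ℤ))) / (q ^ (s : ℤ) - q ^ (-(s : ℤ)))))
        * (q ^ (s : ℤ) - q ^ (-(s : ℤ)))
      = q ^ ((s : ℤ) * N) - q ^ ((s : ℤ) * ((N : ℤ) - 2 * L)) := by
    rw [mul_assoc, div_mul_cancel₀ _ hden, mul_sub, ← zpow_natCast q (s * (N - L)),
      ← zpow_add₀ hq0, ← zpow_add₀ hq0]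
    congr 2
    · push_cast [Nat.cast_sub hL]
      ring
    · push_cast [Nat.cast_sub hL]
      ring
  rw [hqdiv]
  apply mul_right_cancel₀ hden
  rw [Finset.sum_mul, htel, hmul]

lemma conjPart_le (N : ℕ) (lam : Fin N → ℕ) (m : ℕ) : conjPart N lam m ≤ N := by
  classical
  calc conjPart N lam m ≤ (Finset.univ : Finset (Fin N)).card := Finset.card_filter_le _ _
  _ = N := by simp

lemma filter_eq_lt (N : ℕ) (lam : Fin N → ℕ) (hlam : ∀ i j : Fin N, i ≤ j → lam j ≤ lam i)
    (m : ℕ) :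
    (Finset.univ.filter fun i : Fin N => m ≤ lam i)
      = Finset.univ.filter fun i : Fin N => (i : ℕ) < conjPart N lam m := by
  classical
  set S := Finset.univ.filter fun i : Fin N => m ≤ lam i with hS
  have hdown : ∀ i j : Fin N, i ≤ j → j ∈ S → i ∈ S := by
    intro i j hij hj
    rw [hS, Finset.mem_filter] at hj ⊢
    exact ⟨Finset.mem_univ i, le_trans hj.2 (hlam i j hij)⟩
  ext i
  simp only [Finset.mem_filter, Finset.mem_univ, true_and]
  constructor
  · intro hi
    have hsub : Finset.Iic i ⊆ S := fun j hj => hdown j i (Finset.mem_Iic.1 hj) hi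
    have hcard := Finset.card_le_card hsub
    rw [Fin.card_Iic] at hcard
    have : conjPart N lam m = S.card := rfl
    omega
  · intro hi
    by_contra hns
    have hsub : S ⊆ Finset.Iio i := by
      intro j hj
      rw [Finset.mem_Iio]
      by_contra hij
      exact hns (hdown i j (le_of_not_gt hij) hj)
    have hcard := Finset.card_le_card hsub
    rw [Fin.card_Iio] at hcard
    have : conjPart N lam m = S.card := rfl
    omega

lemma weight_sum (s : Finset α) (x c : α → ℂ) (r' : ℕ) :
    ∑ J ∈ s.powersetCard (r' + 1), (∑ j ∈ J, c j) * ∏ j ∈ J, x j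
      = ∑ i ∈ s, c i * (x i * esym (s.erase i) x r') := by
  have step1 : ∀ J ∈ s.powersetCard (r' + 1),
      (∑ j ∈ J, c j) * ∏ k ∈ J, x k = ∑ j ∈ J, c j * ∏ k ∈ J, x k :=
    fun J _ => Finset.sum_mul _ _ _
  rw [Finset.sum_congr rfl step1,
    Finset.sum_comm' (s := s.powersetCard (r' + 1)) (t := fun J => J) (t' := s)
      (s' := fun i => (s.powersetCard (r' + 1)).filter fun J => i ∈ J)
      (fun J i => by
        simp only [Finset.mem_filter]
        constructor
        · rintro ⟨hJ, hiJ⟩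
          exact ⟨⟨hJ, hiJ⟩, (Finset.mem_powersetCard.1 hJ).1 hiJ⟩
        · rintro ⟨⟨hJ, hiJ⟩, _⟩
          exact ⟨hJ, hiJ⟩)]
  refine Finset.sum_congr rfl fun i hi => ?_
  rw [← Finset.mul_sum]
  congr 1
  rw [esym, Finset.mul_sum]
  refine Finset.sum_nbij' (fun J => J.erase i) (fun K => insert i K) ?_ ?_ ?_ ?_ ?_
  · intro J hJ
    obtain ⟨hJP, hiJ⟩ := Finset.mem_filter.1 hJ
    obtain ⟨hJs, hJc⟩ := Finset.mem_powersetCard.1 hJP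
    refine Finset.mem_powersetCard.2 ⟨Finset.erase_subset_erase i hJs, ?_⟩
    rw [Finset.card_erase_of_mem hiJ, hJc]
    omega
  · intro K hK
    obtain ⟨hKs, hKc⟩ := Finset.mem_powersetCard.1 hK
    have hiK : i ∉ K := fun h => Finset.notMem_erase i s (hKs h)
    have his : i ∈ s := hi
    refine Finset.mem_filter.2 ⟨Finset.mem_powersetCard.2 ⟨?_, ?_⟩, Finset.mem_insert_self i K⟩
    · exact Finset.insert_subset his (hKs.trans (Finset.erase_subset i s))
    · rw [Finset.card_insert_of_notMem hiK, hKc]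
  · intro J hJ
    exact Finset.insert_erase (Finset.mem_filter.1 hJ).2
  · intro K hK
    exact Finset.erase_insert fun h => Finset.notMem_erase i s
      ((Finset.mem_powersetCard.1 hK).1 h)
  · intro J hJ
    exact (Finset.mul_prod_erase J x (Finset.mem_filter.1 hJ).2).symm

lemma inner_sum (hq0 : q ≠ 0) {N r' : ℕ} (hrN : r' + 1 ≤ N)
    (hq : ∀ k, 1 ≤ k → k ≤ N → q ^ (2 * k) ≠ 1) (h2 : q ^ 2 ≠ 1) {L : ℕ} (hL : L ≤ N) :
    ∑ i ∈ Finset.univ.filter (fun i : Fin N => (i : ℕ) < L),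
        ((fun j : Fin N => q ^ ((N : ℤ) - 2 * (j : ℕ) - 1)) i
          * esym (Finset.univ.erase i) (fun j : Fin N => q ^ ((N : ℤ) - 2 * (j : ℕ) - 1)) r')
      = ∑ s ∈ Finset.Icc 1 (r' + 1), (-1 : ℂ) ^ (s - 1) * qbinom q N (r' + 1 - s)
          * q ^ (s * (N - L)) * (qint q (s * L) / qint q s) := by
  set x : Fin N → ℂ := fun j => q ^ ((N : ℤ) - 2 * (j : ℕ) - 1) with hx
  have hstep : ∀ i ∈ Finset.univ.filter (fun i : Fin N => (i : ℕ) < L),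
      x i * esym (Finset.univ.erase i) x r'
        = ∑ t ∈ Finset.range (r' + 1),
            (-1 : ℂ) ^ t * esym Finset.univ x (r' - t) * x i ^ (t + 1) := by
    intro i _
    rw [esym_erase (Finset.mem_univ i), Finset.mul_sum]
    exact Finset.sum_congr rfl fun t _ => by ring
  rw [Finset.sum_congr rfl hstep, Finset.sum_comm]
  have hmain : ∀ t ∈ Finset.range (r' + 1),
      ∑ i ∈ Finset.univ.filter (fun i : Fin N => (i : ℕ) < L),
          (-1 : ℂ) ^ t * esym Finset.univ x (r' - t) * x i ^ (t + 1)
        = (-1 : ℂ) ^ t * qbinom q N (r' - t)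
            * q ^ ((t + 1) * (N - L)) * (qint q ((t + 1) * L) / qint q (t + 1)) := by
    intro t ht
    have htr := Finset.mem_range.1 ht
    have hpows : ∑ i ∈ Finset.univ.filter (fun i : Fin N => (i : ℕ) < L), x i ^ (t + 1)
        = ∑ i ∈ Finset.range L, (q ^ ((N : ℤ) - 2 * (i : ℕ) - 1)) ^ (t + 1) := by
      refine Finset.sum_nbij' (fun i => (i : ℕ))
        (fun j => (⟨j % N, Nat.mod_lt j (by omega)⟩ : Fin N)) ?_ ?_ ?_ ?_ ?_
      · intro i hi
        exact Finset.mem_range.2 (Finset.mem_filter.1 hi).2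
      · intro j hj
        have hjL := Finset.mem_range.1 hj
        refine Finset.mem_filter.2 ⟨Finset.mem_univ _, ?_⟩
        simp only
        rw [Nat.mod_eq_of_lt (by omega)]
        omega
      · intro i hi
        have := (Finset.mem_filter.1 hi).2
        ext
        simp only
        rw [Nat.mod_eq_of_lt (by omega)]
      · intro j hj
        have hjL := Finset.mem_range.1 hj
        simp only
        rw [Nat.mod_eq_of_lt (by omega)]
      · intro i hi
        rfl
    have hpull : ∑ i ∈ Finset.univ.filter (fun i : Fin N => (i : ℕ) < L),
        (-1 : ℂ) ^ t * esym Finset.univ x (r' - t) * x i ^ (t + 1)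
        = ((-1 : ℂ) ^ t * esym Finset.univ x (r' - t))
            * ∑ i ∈ Finset.univ.filter (fun i : Fin N => (i : ℕ) < L), x i ^ (t + 1) := by
      rw [Finset.mul_sum]
    rw [hpull, hpows, power_sum hq0 h2 (hq (t + 1) (by omega) (by omega)) hL, hx,
      esym_gauss hq0 N (r' - t) (by omega) hq]
    ring
  rw [Finset.sum_congr rfl hmain]
  refine Finset.sum_nbij' (fun t => t + 1) (fun s => s - 1) ?_ ?_ ?_ ?_ ?_
  · intro t ht
    simp only [Finset.mem_range] at ht
    simp only [Finset.mem_Icc]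
    omega
  · intro s hs
    simp only [Finset.mem_Icc] at hs
    simp only [Finset.mem_range]
    omega
  · intro t ht
    show t + 1 - 1 = t
    omega
  · intro s hs
    simp only [Finset.mem_Icc] at hs
    show s - 1 + 1 = s
    omega
  · intro t ht
    have h1 : t + 1 - 1 = t := by omega
    have h2' : r' + 1 - (t + 1) = r' - t := by omega
    rw [h1, h2']

theorem energy_additivity_identity (N r : ℕ) (hN : 0 < N) (hr1 : 1 ≤ r) (hrN : r ≤ N)
    (q : ℂ) (hq0 : q ≠ 0) (hq : ∀ k, 1 ≤ k → k ≤ N → q ^ (2 * k) ≠ 1)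
    (lam : Fin N → ℕ) (hlam : ∀ i j : Fin N, i ≤ j → lam j ≤ lam i) :
    ∑ J ∈ Finset.powersetCard r (Finset.univ : Finset (Fin N)),
        (∑ j ∈ J, (lam j : ℂ)) * ∏ j ∈ J, q ^ ((N : ℤ) - 2 * ((j : ℕ) + 1 : ℤ) + 1)
      = ∑ m ∈ Finset.Icc 1 (lam ⟨0, hN⟩), ∑ s ∈ Finset.Icc 1 r,
          (-1 : ℂ) ^ (s - 1) * qbinom q N (r - s) *
            q ^ (s * (N - conjPart N lam m)) *
              (qint q (s * conjPart N lam m) / qint q s) := by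
  obtain ⟨r', rfl⟩ : ∃ r', r = r' + 1 := ⟨r - 1, by omega⟩
  have h2 : q ^ 2 ≠ 1 := by have := hq 1 le_rfl hN; simpa using this
  have hlamK : ∀ j : Fin N, lam j ≤ lam ⟨0, hN⟩ := fun j => hlam ⟨0, hN⟩ j (by simp [Fin.le_def])
  have hexp : ∀ j : Fin N, (N : ℤ) - 2 * ((j : ℕ) + 1 : ℤ) + 1 = (N : ℤ) - 2 * (j : ℕ) - 1 :=
    fun j => by ring
  simp only [hexp]
  have hind : ∀ j : Fin N, (lam j : ℂ)
      = ∑ m ∈ Finset.Icc 1 (lam ⟨0, hN⟩), if m ≤ lam j then (1 : ℂ) else 0 := by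
    intro j
    have h1 : Finset.filter (fun m => m ≤ lam j) (Finset.Icc 1 (lam ⟨0, hN⟩))
        = Finset.Icc 1 (lam j) := by
      ext m
      simp only [Finset.mem_filter, Finset.mem_Icc]
      have := hlamK j
      omega
    rw [Finset.sum_boole, h1, Nat.card_Icc]
    simp
  simp only [hind]
  have hswap : ∀ J ∈ Finset.powersetCard (r' + 1) (Finset.univ : Finset (Fin N)),
      (∑ j ∈ J, ∑ m ∈ Finset.Icc 1 (lam ⟨0, hN⟩), if m ≤ lam j then (1 : ℂ) else 0)
          * ∏ j ∈ J, q ^ ((N : ℤ) - 2 * (j : ℕ) - 1)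
        = ∑ m ∈ Finset.Icc 1 (lam ⟨0, hN⟩),
            (∑ j ∈ J, if m ≤ lam j then (1 : ℂ) else 0)
              * ∏ j ∈ J, q ^ ((N : ℤ) - 2 * (j : ℕ) - 1) := by
    intro J _
    rw [Finset.sum_comm, Finset.sum_mul]
  rw [Finset.sum_congr rfl hswap, Finset.sum_comm]
  refine Finset.sum_congr rfl fun m hm => ?_
  rw [weight_sum Finset.univ (fun j : Fin N => q ^ ((N : ℤ) - 2 * (j : ℕ) - 1))
    (fun j => if m ≤ lam j then (1 : ℂ) else 0) r']
  have hfilter : ∑ i ∈ (Finset.univ : Finset (Fin N)),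
      (if m ≤ lam i then (1 : ℂ) else 0)
        * ((fun j : Fin N => q ^ ((N : ℤ) - 2 * (j : ℕ) - 1)) i
          * esym (Finset.univ.erase i) (fun j : Fin N => q ^ ((N : ℤ) - 2 * (j : ℕ) - 1)) r')
      = ∑ i ∈ Finset.univ.filter (fun i : Fin N => m ≤ lam i),
          ((fun j : Fin N => q ^ ((N : ℤ) - 2 * (j : ℕ) - 1)) i
            * esym (Finset.univ.erase i) (fun j : Fin N => q ^ ((N : ℤ) - 2 * (j : ℕ) - 1)) r') := by
    rw [Finset.sum_filter]
    refine Finset.sum_congr rfl fun i _ => ?_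
    split <;> simp
  rw [hfilter, filter_eq_lt N lam hlam m,
    inner_sum hq0 hrN hq h2 (conjPart_le N lam m)]

end Stmt15
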